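/- The conditional log-determinant mutual information reduces to an unconditional one via Schur complement: for any tripartite positive definite matrix V_ABE, I_M(A:B|E)_{V_ABE} = I_M(A:B)_{V_ABE / V_E}. -/

import Mathlib

open Matrix

lemma toBlocks₂₂_posDef {α ε : Type*} [Fintype α] [Fintype ε]
    (V : Matrix (α ⊕ ε) (α ⊕ ε) ℝ) (hV : V.PosDef) : V.toBlocks₂₂.PosDef := by
  rw [Matrix.posDef_iff_dotProduct_mulVec] at hV ⊢
  refine ⟨hV.1.submatrix Sum.inr, fun x hx => ?_⟩
  have hy : (Sum.elim 0 x : α ⊕ ε → ℝ) ≠ 0 := by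
    intro h
    apply hx
    funext k
    have := congrFun h (Sum.inr k)
    simpa using this
  have := hV.2 hy
  convert this using 1
  simp [dotProduct, mulVec, Fintype.sum_sum_type, toBlocks₂₂]

/-- The log-determinant mutual information of a bipartite positive matrix. -/
noncomputable def IM {α β : Type*} [Fintype α] [Fintype β] [DecidableEq α] [DecidableEq β]
    (W : Matrix (α ⊕ β) (α ⊕ β) ℝ) : ℝ :=
  (1/2) * Real.logb 2 ((W.toBlocks₁₁.det * W.toBlocks₂₂.det) / W.det)

/-- The conditional log-determinant mutual information reduces to an unconditional one
via the Schur complement: for tripartite positive definite `V_ABE`,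
`I_M(A:B|E)_V = I_M(A:B)_{V/V_E}`. -/
theorem IM_conditional_schur {α β ε : Type*} [Fintype α] [Fintype β] [Fintype ε]
    [DecidableEq α] [DecidableEq β] [DecidableEq ε]
    (V : Matrix ((α ⊕ β) ⊕ ε) ((α ⊕ β) ⊕ ε) ℝ) (hV : V.PosDef) :
    (1/2) * Real.logb 2
      (((V.submatrix (Sum.elim (Sum.inl ∘ Sum.inl) Sum.inr : α ⊕ ε → (α ⊕ β) ⊕ ε)
            (Sum.elim (Sum.inl ∘ Sum.inl) Sum.inr : α ⊕ ε → (α ⊕ β) ⊕ ε)).det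
        * (V.submatrix (Sum.elim (Sum.inl ∘ Sum.inr) Sum.inr : β ⊕ ε → (α ⊕ β) ⊕ ε)
            (Sum.elim (Sum.inl ∘ Sum.inr) Sum.inr : β ⊕ ε → (α ⊕ β) ⊕ ε)).det)
       / (V.toBlocks₂₂.det * V.det))
    = IM (V.toBlocks₁₁ - V.toBlocks₁₂ * V.toBlocks₂₂⁻¹ * V.toBlocks₂₁) := by
  have hE : V.toBlocks₂₂.PosDef := toBlocks₂₂_posDef V hV
  have hdE : V.toBlocks₂₂.det ≠ 0 := ne_of_gt hE.det_pos
  have : Invertible V.toBlocks₂₂ := invertibleOfIsUnitDet _ (isUnit_iff_ne_zero.2 hdE)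
  -- block pieces
  set A₁ : Matrix α α ℝ := fun i j => V (Sum.inl (Sum.inl i)) (Sum.inl (Sum.inl j)) with hA₁
  set B₁ : Matrix α ε ℝ := fun i k => V (Sum.inl (Sum.inl i)) (Sum.inr k) with hB₁
  set C₁ : Matrix ε α ℝ := fun k j => V (Sum.inr k) (Sum.inl (Sum.inl j)) with hC₁
  set A₂ : Matrix β β ℝ := fun i j => V (Sum.inl (Sum.inr i)) (Sum.inl (Sum.inr j)) with hA₂
  set B₂ : Matrix β ε ℝ := fun i k => V (Sum.inl (Sum.inr i)) (Sum.inr k) with hB₂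
  set C₂ : Matrix ε β ℝ := fun k j => V (Sum.inr k) (Sum.inl (Sum.inr j)) with hC₂
  have hsub1 : V.submatrix (Sum.elim (Sum.inl ∘ Sum.inl) Sum.inr : α ⊕ ε → (α ⊕ β) ⊕ ε)
      (Sum.elim (Sum.inl ∘ Sum.inl) Sum.inr) = fromBlocks A₁ B₁ C₁ V.toBlocks₂₂ := by
    ext i j; cases i <;> cases j <;> rfl
  have hsub2 : V.submatrix (Sum.elim (Sum.inl ∘ Sum.inr) Sum.inr : β ⊕ ε → (α ⊕ β) ⊕ ε)
      (Sum.elim (Sum.inl ∘ Sum.inr) Sum.inr) = fromBlocks A₂ B₂ C₂ V.toBlocks₂₂ := by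
    ext i j; cases i <;> cases j <;> rfl
  have hVblocks : V = fromBlocks V.toBlocks₁₁ V.toBlocks₁₂ V.toBlocks₂₁ V.toBlocks₂₂ := by
    ext i j; cases i <;> cases j <;> rfl
  set S := V.toBlocks₁₁ - V.toBlocks₁₂ * V.toBlocks₂₂⁻¹ * V.toBlocks₂₁ with hS
  have hS11 : S.toBlocks₁₁ = A₁ - B₁ * V.toBlocks₂₂⁻¹ * C₁ := by
    ext i j
    simp only [Matrix.sub_apply, Matrix.mul_apply]
    simp [hS, toBlocks₁₁, toBlocks₁₂, toBlocks₂₁, Matrix.mul_apply, hA₁, hB₁, hC₁,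
      Finset.sum_mul, Finset.mul_sum]
  have hS22 : S.toBlocks₂₂ = A₂ - B₂ * V.toBlocks₂₂⁻¹ * C₂ := by
    ext i j
    simp only [Matrix.sub_apply, Matrix.mul_apply]
    simp [hS, toBlocks₁₁, toBlocks₁₂, toBlocks₂₁, toBlocks₂₂, Matrix.mul_apply, hA₂, hB₂, hC₂,
      Finset.sum_mul, Finset.mul_sum]
  have hinv : (⅟ V.toBlocks₂₂ : Matrix ε ε ℝ) = V.toBlocks₂₂⁻¹ := invOf_eq_nonsing_inv _
  have hd1 : (V.submatrix (Sum.elim (Sum.inl ∘ Sum.inl) Sum.inr : α ⊕ ε → (α ⊕ β) ⊕ ε)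
      (Sum.elim (Sum.inl ∘ Sum.inl) Sum.inr)).det = V.toBlocks₂₂.det * S.toBlocks₁₁.det := by
    rw [hsub1, det_fromBlocks₂₂, hinv, hS11]
  have hd2 : (V.submatrix (Sum.elim (Sum.inl ∘ Sum.inr) Sum.inr : β ⊕ ε → (α ⊕ β) ⊕ ε)
      (Sum.elim (Sum.inl ∘ Sum.inr) Sum.inr)).det = V.toBlocks₂₂.det * S.toBlocks₂₂.det := by
    rw [hsub2, det_fromBlocks₂₂, hinv, hS22]
  have hdV : V.det = V.toBlocks₂₂.det * S.det := by
    conv_lhs => rw [hVblocks]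
    rw [det_fromBlocks₂₂, hinv]
  rw [IM]
  congr 1
  rw [hd1, hd2, hdV,
    show (V.toBlocks₂₂.det * S.toBlocks₁₁.det) * (V.toBlocks₂₂.det * S.toBlocks₂₂.det)
      = (V.toBlocks₂₂.det * V.toBlocks₂₂.det) * (S.toBlocks₁₁.det * S.toBlocks₂₂.det) by ring,
    show V.toBlocks₂₂.det * (V.toBlocks₂₂.det * S.det)
      = (V.toBlocks₂₂.det * V.toBlocks₂₂.det) * S.det by ring,
    mul_div_mul_left _ _ (mul_ne_zero hdE hdE)]
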